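/- For any integer t ≥ 1 and any finite simple graph G, the transitivity of G is greater than or equal to t if and only if G contains a t-atom as a subgraph. -/

import Mathlib

/-- `A` dominates `B` in `G`: every vertex of `B` has a neighbour in `A`. -/
def SimpleGraph.Dominates {V : Type*} (G : SimpleGraph V) (A B : Finset V) : Prop :=
  ∀ b ∈ B, ∃ a ∈ A, G.Adj a b

/-- `P : Fin k → Finset V` is a transitive `k`-partition of `G`. -/
def SimpleGraph.IsTransitivePartition {V : Type*} (G : SimpleGraph V)
    {k : ℕ} (P : Fin k → Finset V) : Prop :=
  (∀ i, (P i).Nonempty) ∧ (∀ v : V, ∃! i, v ∈ P i) ∧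
  (∀ i j : Fin k, i < j → G.Dominates (P i) (P j))

/-- The transitivity `Tr(G)`: the largest `k` admitting a transitive `k`-partition. -/
noncomputable def SimpleGraph.transitivity {V : Type*} [Fintype V] (G : SimpleGraph V) : ℕ :=
  sSup {k : ℕ | ∃ P : Fin k → Finset V, G.IsTransitivePartition P}

/-- `H` is (isomorphic to) a subgraph of `G`. -/
def ContainsSubgraph {α β : Type*} (H : SimpleGraph α) (G : SimpleGraph β) : Prop :=
  ∃ f : α → β, Function.Injective f ∧ ∀ a b, H.Adj a b → G.Adj (f a) (f b)

/-- `H` is (isomorphic to) an induced subgraph of `G`. -/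
def ContainsInduced {α β : Type*} (H : SimpleGraph α) (G : SimpleGraph β) : Prop :=
  Nonempty (H ↪g G)

/-- The complete bipartite graph `K_{t,t}`. -/
def Ktt (t : ℕ) : SimpleGraph (Fin t ⊕ Fin t) := completeBipartiteGraph (Fin t) (Fin t)

/-- `K_{t,t}` minus one edge. -/
def KttMinusE (t : ℕ) : SimpleGraph (Fin t ⊕ Fin t) :=
  (Ktt t).deleteEdges {e | ∃ h : 0 < t, e = s(Sum.inl ⟨0, h⟩, Sum.inr ⟨0, h⟩)}

/-- A graph on `Fin m ⊕ Fin n` is a bipartite chain graph (w.r.t. the canonical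
orderings of the two sides): edges only go between the two sides, and
neighbourhoods are nested along each ordering. -/
def IsBipartiteChain {m n : ℕ} (G : SimpleGraph (Fin m ⊕ Fin n)) : Prop :=
  (∀ i j : Fin m, ¬ G.Adj (Sum.inl i) (Sum.inl j)) ∧
  (∀ i j : Fin n, ¬ G.Adj (Sum.inr i) (Sum.inr j)) ∧
  (∀ i j : Fin m, i ≤ j → ∀ y : Fin n, G.Adj (Sum.inl j) (Sum.inr y) → G.Adj (Sum.inl i) (Sum.inr y)) ∧
  (∀ i j : Fin n, i ≤ j → ∀ x : Fin m, G.Adj (Sum.inl x) (Sum.inr j) → G.Adj (Sum.inl x) (Sum.inr i))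


/-- One step of the `t`-atom construction: starting from the graph `H` on `α`,
add an independent set `Fin r` of new vertices, a perfect matching between the new
vertices and the `r`-element subset `W = range w` of the old vertices (via the
injection `w`), and join every old vertex outside `W` to exactly one new vertex,
namely the one given by `assign`. -/
def atomStep {α : Type} (H : SimpleGraph α) {r : ℕ} (w : Fin r → α) (assign : α → Fin r) :
    SimpleGraph (α ⊕ Fin r) where
  Adj u v :=
    match u, v with
    | Sum.inl a, Sum.inl b => H.Adj a b
    | Sum.inl a, Sum.inr i => w i = a ∨ (a ∉ Set.range w ∧ assign a = i)
    | Sum.inr i, Sum.inl a => w i = a ∨ (a ∉ Set.range w ∧ assign a = i)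
    | Sum.inr _, Sum.inr _ => False
  symm := by
    constructor
    rintro (a | i) (b | j) h
    · exact H.adj_symm h
    · exact h
    · exact h
    · exact h.elim
  loopless := by
    constructor
    rintro (a | i) h
    · exact H.irrefl h
    · exact h

/-- `IsTAtom t H`: the graph `H` is a `t`-atom.  The only `1`-atom is `K₁`, the only
`2`-atom is `K₂`, and for `t ≥ 3` a `t`-atom is obtained from a `(t-1)`-atom `H` on a
vertex set of size `n` by choosing `r ∈ {1,...,n}`, an `r`-subset `W` (the range of the
injection `w`), and performing the construction `atomStep`. -/
inductive IsTAtom : ℕ → ∀ {α : Type}, SimpleGraph α → Prop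
  | one : IsTAtom 1 (⊥ : SimpleGraph (Fin 1))
  | two : IsTAtom 2 (⊤ : SimpleGraph (Fin 2))
  | step {t : ℕ} {α : Type} [Fintype α] {H : SimpleGraph α} {r : ℕ}
      (ht : 2 ≤ t) (hH : IsTAtom t H) (hr : 1 ≤ r) (hrcard : r ≤ Fintype.card α)
      (w : Fin r → α) (hw : Function.Injective w) (assign : α → Fin r) :
      IsTAtom (t + 1) (atomStep H w assign)


section Aux

open Finset

lemma dominates_superset {V : Type*} {G : SimpleGraph V} {A A' B : Finset V}
    (h : G.Dominates A B) (hAA : A ⊆ A') : G.Dominates A' B := fun b hb => by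
  obtain ⟨a, ha, hadj⟩ := h b hb
  exact ⟨a, hAA ha, hadj⟩

/-- From disjoint nonempty dominating parts, extract a `t`-atom subgraph living inside the parts. -/
lemma atom_of_parts : ∀ (t : ℕ), 1 ≤ t → ∀ {V : Type} [DecidableEq V] (G : SimpleGraph V)
    (P : Fin t → Finset V), (∀ i, (P i).Nonempty) →
    (∀ i j, i ≠ j → Disjoint (P i) (P j)) →
    (∀ i j, i < j → G.Dominates (P i) (P j)) →
    ∃ (α : Type) (_ : Fintype α) (H : SimpleGraph α), Nonempty α ∧ IsTAtom t H ∧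
      ∃ f : α → V, Function.Injective f ∧ (∀ a b, H.Adj a b → G.Adj (f a) (f b)) ∧
        ∀ a, ∃ i, f a ∈ P i := by
  intro t ht
  induction t, ht using Nat.le_induction with
  | base =>
    intro V _ G P hne _ _
    obtain ⟨v, hv⟩ := hne 0
    refine ⟨Fin 1, inferInstance, ⊥, ⟨0⟩, IsTAtom.one, fun _ => v, ?_, ?_, ?_⟩
    · intro i j _; exact Subsingleton.elim i j
    · intro a b h; exact h.elim
    · intro a; exact ⟨0, hv⟩
  | succ t ht IH =>
    rcases eq_or_lt_of_le ht with h1 | h2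
    · -- t = 1, target is t + 1 = 2
      subst h1
      intro V _ G P hne hdisj hdom
      obtain ⟨b, hb⟩ := hne 1
      obtain ⟨a, ha, hadj⟩ := hdom 0 1 (by decide) b hb
      clear IH
      have hcases : ∀ k : Fin 2, k = 0 ∨ k = 1 := by decide
      have h10 : (1 : Fin 2) ≠ 0 := by decide
      have hab : a ≠ b := fun h => G.irrefl (h ▸ hadj)
      refine ⟨Fin 2, inferInstance, ⊤, ⟨0⟩, IsTAtom.two,
        (fun i => if i = 0 then a else b), ?_, ?_, ?_⟩
      · intro i j hij
        dsimp only at hij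
        rcases hcases i with hi | hi <;> rcases hcases j with hj | hj <;>
          subst hi <;> subst hj
        · rfl
        · rw [if_pos rfl, if_neg h10] at hij; exact absurd hij hab
        · rw [if_pos rfl, if_neg h10] at hij; exact absurd hij.symm hab
        · rfl
      · intro i j hij
        rw [SimpleGraph.top_adj] at hij
        dsimp only
        rcases hcases i with hi | hi <;> rcases hcases j with hj | hj <;>
          subst hi <;> subst hj
        · exact absurd rfl hij
        · rw [if_pos rfl, if_neg h10]; exact hadj
        · rw [if_pos rfl, if_neg h10]; exact hadj.symm
        · exact absurd rfl hij
      · intro i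
        rcases hcases i with hi | hi
        · subst hi
          refine ⟨0, ?_⟩
          show (if (0 : Fin 2) = 0 then a else b) ∈ P 0
          rw [if_pos rfl]; exact ha
        · subst hi
          refine ⟨1, ?_⟩
          show (if (1 : Fin 2) = 0 then a else b) ∈ P 1
          rw [if_neg h10]; exact hb
    · -- t ≥ 2, generic step
      intro V _ G P hne hdisj hdom
      set Q : Fin t → Finset V := fun i => P i.succ with hQ
      obtain ⟨α, instα, H, hαne, hH, f, hfinj, hfhom, hfmem⟩ :=
        IH G Q (fun i => hne i.succ)
          (fun i j hij => hdisj i.succ j.succ (fun h => hij (Fin.succ_injective _ h)))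
          (fun i j hij => hdom i.succ j.succ (by simpa using hij))
      letI := instα
      have hpick : ∀ a : α, ∃ v, v ∈ P 0 ∧ G.Adj v (f a) := by
        intro a
        obtain ⟨i, hi⟩ := hfmem a
        obtain ⟨v, hv, hadj⟩ := hdom 0 i.succ (Fin.succ_pos i) (f a) hi
        exact ⟨v, hv, hadj⟩
      choose g hg1 hg2 using hpick
      set S : Finset V := Finset.univ.image g with hS
      have hSne : S.Nonempty := by
        obtain ⟨a⟩ := hαne
        exact ⟨g a, by simp [hS]⟩
      set r : ℕ := S.card with hr
      have hr1 : 1 ≤ r := Finset.card_pos.mpr hSne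
      set e : {x // x ∈ S} ≃ Fin r := S.equivFin with he
      have hmemS : ∀ a : α, g a ∈ S := fun a => by simp [hS]
      set idx : α → Fin r := fun a => e ⟨g a, hmemS a⟩ with hidx
      have hidxval : ∀ a : α, ((e.symm (idx a) : {x // x ∈ S}) : V) = g a := by
        intro a; simp [hidx]
      have hsurj : Function.Surjective idx := by
        intro i
        have : ((e.symm i : {x // x ∈ S}) : V) ∈ S := (e.symm i).2
        simp only [hS, Finset.mem_image, Finset.mem_univ, true_and] at this
        obtain ⟨a, ha⟩ := this
        refine ⟨a, ?_⟩
        simp only [hidx]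
        have : (⟨g a, hmemS a⟩ : {x // x ∈ S}) = e.symm i := Subtype.ext ha
        rw [this, Equiv.apply_symm_apply]
      choose w hw using hsurj
      have hwinj : Function.Injective w := by
        intro i j hij
        rw [← hw i, ← hw j, hij]
      have hrcard : r ≤ Fintype.card α := by
        simpa using Fintype.card_le_of_surjective idx (fun i => ⟨w i, hw i⟩)
      refine ⟨α ⊕ Fin r, inferInstance, atomStep H w idx, ⟨Sum.inl (Classical.choice hαne)⟩,
        IsTAtom.step h2 hH hr1 hrcard w hwinj idx,
        Sum.elim f (fun i => ((e.symm i : {x // x ∈ S}) : V)), ?_, ?_, ?_⟩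
      · -- injectivity
        have hgP0 : ∀ i : Fin r, ((e.symm i : {x // x ∈ S}) : V) ∈ P 0 := by
          intro i
          have : ((e.symm i : {x // x ∈ S}) : V) ∈ S := (e.symm i).2
          simp only [hS, Finset.mem_image, Finset.mem_univ, true_and] at this
          obtain ⟨a, ha⟩ := this
          rw [← ha]; exact hg1 a
        have hfP : ∀ a : α, ∃ i : Fin t, f a ∈ P i.succ := hfmem
        rintro (a | i) (b | j) hab
        · exact congrArg Sum.inl (hfinj hab)
        · exfalso
          obtain ⟨k, hk⟩ := hfmem a
          have hab' : f a = ((e.symm j : {x // x ∈ S}) : V) := hab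
          have h0 : f a ∈ P 0 := by rw [hab']; exact hgP0 j
          exact Finset.notMem_empty _ ((hdisj 0 k.succ (Fin.succ_ne_zero k).symm).le_bot (Finset.mem_inter.mpr ⟨h0, hk⟩))
        · exfalso
          obtain ⟨k, hk⟩ := hfmem b
          have hab' : ((e.symm i : {x // x ∈ S}) : V) = f b := hab
          have h0 : f b ∈ P 0 := by rw [← hab']; exact hgP0 i
          exact Finset.notMem_empty _ ((hdisj 0 k.succ (Fin.succ_ne_zero k).symm).le_bot (Finset.mem_inter.mpr ⟨h0, hk⟩))
        · have hab' : ((e.symm i : {x // x ∈ S}) : V) = ((e.symm j : {x // x ∈ S}) : V) := hab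
          exact congrArg Sum.inr (e.symm.injective (Subtype.coe_injective hab'))
      · -- homomorphism
        rintro (a | i) (b | j) hab
        · exact hfhom a b hab
        · rcases hab with h | ⟨_, h⟩
          · subst h
            have : ((e.symm (idx (w j)) : {x // x ∈ S}) : V) = g (w j) := hidxval _
            rw [hw j] at this
            simp only [Sum.elim_inl, Sum.elim_inr, this]
            exact (hg2 (w j)).symm
          · subst h
            simp only [Sum.elim_inl, Sum.elim_inr, hidxval a]
            exact (hg2 a).symm
        · rcases hab with h | ⟨_, h⟩
          · subst h
            have : ((e.symm (idx (w i)) : {x // x ∈ S}) : V) = g (w i) := hidxval _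
            rw [hw i] at this
            simp only [Sum.elim_inl, Sum.elim_inr, this]
            exact hg2 (w i)
          · subst h
            simp only [Sum.elim_inl, Sum.elim_inr, hidxval b]
            exact hg2 b
        · exact hab.elim
      · -- membership
        rintro (a | i)
        · obtain ⟨k, hk⟩ := hfmem a
          exact ⟨k.succ, hk⟩
        · refine ⟨0, ?_⟩
          have : ((e.symm i : {x // x ∈ S}) : V) ∈ S := (e.symm i).2
          simp only [hS, Finset.mem_image, Finset.mem_univ, true_and] at this
          obtain ⟨a, ha⟩ := this
          simpa [← ha] using hg1 a

end Aux

/-- From a `t`-atom subgraph, build disjoint dominating parts covering exactly its image. -/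
lemma parts_of_atom : ∀ {t : ℕ} {α : Type} {H : SimpleGraph α}, IsTAtom t H →
    ∀ {V : Type} [DecidableEq V] (G : SimpleGraph V) (f : α → V), Function.Injective f →
    (∀ a b, H.Adj a b → G.Adj (f a) (f b)) →
    ∃ Q : Fin t → Finset V, (∀ i, (Q i).Nonempty) ∧
      (∀ i j, i ≠ j → Disjoint (Q i) (Q j)) ∧
      (∀ i j, i < j → G.Dominates (Q i) (Q j)) ∧
      (∀ v, (∃ i, v ∈ Q i) ↔ v ∈ Set.range f) := by
  intro t α H h
  induction h with
  | one =>
    intro V _ G f hfinj hfhom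
    refine ⟨fun _ => {f 0}, fun _ => ⟨f 0, Finset.mem_singleton_self _⟩, ?_, ?_, ?_⟩
    · intro i j hij; exact absurd (Subsingleton.elim i j) hij
    · intro i j hij; exact absurd (Subsingleton.elim i j) hij.ne
    · intro v
      constructor
      · rintro ⟨i, hi⟩
        exact ⟨0, (Finset.mem_singleton.mp hi).symm⟩
      · rintro ⟨a, ha⟩
        exact ⟨0, Finset.mem_singleton.mpr (by rw [← ha, Subsingleton.elim a 0])⟩
  | two =>
    intro V _ G f hfinj hfhom
    refine ⟨fun i => {f i}, fun i => ⟨f i, Finset.mem_singleton_self _⟩, ?_, ?_, ?_⟩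
    · intro i j hij
      simp only [Finset.disjoint_singleton]
      exact fun h => hij (hfinj h)
    · intro i j hij
      intro b hb
      rw [Finset.mem_singleton] at hb
      subst hb
      exact ⟨f i, Finset.mem_singleton_self _, hfhom i j ((SimpleGraph.top_adj i j).mpr hij.ne)⟩
    · intro v
      constructor
      · rintro ⟨i, hi⟩; exact ⟨i, (Finset.mem_singleton.mp hi).symm⟩
      · rintro ⟨a, ha⟩; exact ⟨a, Finset.mem_singleton.mpr ha.symm⟩
  | step ht hH hr hrcard w hw assign IH =>
    rename_i t β instβ H' r
    intro V _ G f hfinj hfhom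
    obtain ⟨Q, hQne, hQdisj, hQdom, hQrange⟩ :=
      IH G (f ∘ Sum.inl) (hfinj.comp Sum.inl_injective)
        (fun a b hab => hfhom (Sum.inl a) (Sum.inl b) hab)
    refine ⟨fun i => Fin.cases (Finset.univ.image (f ∘ Sum.inr)) Q i, ?_, ?_, ?_, ?_⟩
    · intro i
      refine Fin.cases ?_ ?_ i
      · simp only [Fin.cases_zero]
        have : Nonempty (Fin r) := ⟨⟨0, hr⟩⟩
        exact (Finset.univ_nonempty).image _
      · intro k
        simpa using hQne k
    · -- disjointness
      have key : ∀ (k : Fin t) (v : V), v ∈ Finset.univ.image (f ∘ Sum.inr) → v ∉ Q k := by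
        intro k v hv hvQ
        simp only [Finset.mem_image, Finset.mem_univ, true_and, Function.comp] at hv
        obtain ⟨i, hi⟩ := hv
        have : v ∈ Set.range (f ∘ Sum.inl) := (hQrange v).mp ⟨k, hvQ⟩
        obtain ⟨a, ha⟩ := this
        have : Sum.inr i = Sum.inl a := hfinj (hi.trans ha.symm)
        cases this
      intro i j
      induction i using Fin.cases with
      | zero =>
        induction j using Fin.cases with
        | zero => intro h; exact absurd rfl h
        | succ k =>
          intro _
          simp only [Fin.cases_zero, Fin.cases_succ]
          rw [Finset.disjoint_left]
          exact fun {v} hv => key k v hv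
      | succ k =>
        induction j using Fin.cases with
        | zero =>
          intro _
          simp only [Fin.cases_zero, Fin.cases_succ]
          rw [Finset.disjoint_right]
          exact fun {v} hv => key k v hv
        | succ l =>
          intro h
          simp only [Fin.cases_succ]
          exact hQdisj k l (fun h' => h (by rw [h']))
    · -- domination
      intro i j hij
      have hj0 : j ≠ 0 := by
        intro h; subst h; exact absurd hij (by simp [Fin.le_zero_iff])
      obtain ⟨j', rfl⟩ := Fin.exists_succ_eq.mpr hj0
      revert hij
      induction i using Fin.cases with
      | zero =>
        intro _
        simp only [Fin.cases_zero, Fin.cases_succ]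
        intro b hb
        have : b ∈ Set.range (f ∘ Sum.inl) := (hQrange b).mp ⟨j', hb⟩
        obtain ⟨a, ha⟩ := this
        by_cases hmem : a ∈ Set.range w
        · obtain ⟨i0, hi0⟩ := hmem
          refine ⟨f (Sum.inr i0), Finset.mem_image.mpr ⟨i0, Finset.mem_univ _, rfl⟩, ?_⟩
          rw [← ha]
          exact hfhom (Sum.inr i0) (Sum.inl a) (Or.inl hi0)
        · refine ⟨f (Sum.inr (assign a)), Finset.mem_image.mpr ⟨assign a, Finset.mem_univ _, rfl⟩, ?_⟩
          rw [← ha]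
          exact hfhom (Sum.inr (assign a)) (Sum.inl a) (Or.inr ⟨hmem, rfl⟩)
      | succ k =>
        intro hik
        simp only [Fin.cases_succ]
        have : k < j' := by
          rwa [Fin.succ_lt_succ_iff] at hik
        exact hQdom k j' this
    · intro v
      constructor
      · rintro ⟨i, hi⟩
        revert hi
        refine Fin.cases ?_ ?_ i
        · intro hv
          simp only [Fin.cases_zero, Finset.mem_image, Finset.mem_univ, true_and,
            Function.comp] at hv
          obtain ⟨k, hk⟩ := hv
          exact ⟨Sum.inr k, hk⟩
        · intro k hv
          simp only [Fin.cases_succ] at hv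
          obtain ⟨x, hx⟩ := (hQrange v).mp ⟨k, hv⟩
          exact ⟨Sum.inl x, hx⟩
      · rintro ⟨x, rfl⟩
        cases x with
        | inl a =>
          obtain ⟨k, hk⟩ := (hQrange (f (Sum.inl a))).mpr ⟨a, rfl⟩
          exact ⟨k.succ, by simpa using hk⟩
        | inr i =>
          exact ⟨0, by simp⟩

theorem transitivity_ge_iff_contains_atom' {V : Type} [Fintype V] (G : SimpleGraph V)
    (t : ℕ) (ht : 1 ≤ t) :
    t ≤ G.transitivity ↔
      ∃ (α : Type) (H : SimpleGraph α), IsTAtom t H ∧ ContainsSubgraph H G := by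
  classical
  set Sset : Set ℕ := {k : ℕ | ∃ P : Fin k → Finset V, G.IsTransitivePartition P} with hSset
  have htr : G.transitivity = sSup Sset := rfl
  have hbdd : BddAbove Sset := by
    refine ⟨Fintype.card V, ?_⟩
    rintro k ⟨P, hP⟩
    choose rep hrepmem using hP.1
    have hinj : Function.Injective rep := by
      intro i j hij
      obtain ⟨i0, _, huniq⟩ := hP.2.1 (rep i)
      have h1 := huniq i (hrepmem i)
      have h2 := huniq j (hij ▸ hrepmem j)
      rw [h1, h2]
    simpa using Fintype.card_le_of_injective rep hinj
  have hSne : Sset.Nonempty := by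
    cases isEmpty_or_nonempty V with
    | inl h =>
      refine ⟨0, Fin.elim0, fun i => i.elim0, fun v => (h.false v).elim, fun i => i.elim0⟩
    | inr h =>
      refine ⟨1, fun _ => Finset.univ, fun _ => Finset.univ_nonempty, ?_, ?_⟩
      · intro v; exact ⟨0, Finset.mem_univ v, fun j _ => Subsingleton.elim j 0⟩
      · intro i j hij; exact absurd (Subsingleton.elim i j) hij.ne
  rw [htr]
  constructor
  · intro hle
    obtain ⟨P, hP⟩ := Nat.sSup_mem hSne hbdd
    set Q : Fin t → Finset V := fun i => P (Fin.castLE hle i) with hQ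
    have hdisjP : ∀ a b : Fin (sSup Sset), a ≠ b → Disjoint (P a) (P b) := by
      intro a b hab
      rw [Finset.disjoint_left]
      intro v hva hvb
      obtain ⟨i0, _, huniq⟩ := hP.2.1 v
      exact hab ((huniq a hva).trans (huniq b hvb).symm)
    obtain ⟨α, instα, H, _, hH, f, hfinj, hfhom, _⟩ :=
      atom_of_parts t ht G Q (fun i => hP.1 _)
        (fun i j hij => hdisjP _ _ (fun h => hij (Fin.castLE_injective hle h)))
        (fun i j hij => hP.2.2 _ _ hij)
    exact ⟨α, H, hH, f, hfinj, hfhom⟩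
  · rintro ⟨α, H, hH, f, hfinj, hfhom⟩
    obtain ⟨Q, hQne, hQdisj, hQdom, hQrange⟩ := parts_of_atom hH G f hfinj hfhom
    set z : Fin t := ⟨0, ht⟩ with hz
    set rest : Finset V := Finset.univ \ Finset.univ.biUnion Q with hrest
    set P : Fin t → Finset V := fun i => if i = z then Q z ∪ rest else Q i with hPdef
    have hrestQ : ∀ v ∈ rest, ∀ i, v ∉ Q i := by
      intro v hv i hvi
      rw [hrest, Finset.mem_sdiff] at hv
      exact hv.2 (Finset.mem_biUnion.mpr ⟨i, Finset.mem_univ _, hvi⟩)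
    have huniqQ : ∀ (v : V) (a b : Fin t), v ∈ Q a → v ∈ Q b → a = b := by
      intro v a b hva hvb
      by_contra hab
      exact Finset.disjoint_left.mp (hQdisj a b hab) hva hvb
    have hPpart : G.IsTransitivePartition P := by
      refine ⟨?_, ?_, ?_⟩
      · intro i
        by_cases hi : i = z
        · subst hi
          obtain ⟨v, hv⟩ := hQne z
          exact ⟨v, by rw [hPdef]; simp only [if_pos rfl]; exact Finset.mem_union_left _ hv⟩
        · obtain ⟨v, hv⟩ := hQne i
          exact ⟨v, by rw [hPdef]; simp only [if_neg hi]; exact hv⟩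
      · intro v
        by_cases hv : ∃ i, v ∈ Q i
        · obtain ⟨i, hi⟩ := hv
          refine ⟨i, ?_, ?_⟩
          · by_cases hiz : i = z
            · subst hiz; rw [hPdef]; simp only [if_pos rfl]
              exact Finset.mem_union_left _ hi
            · rw [hPdef]; simp only [if_neg hiz]; exact hi
          · intro j hj
            by_cases hjz : j = z
            · subst hjz
              rw [hPdef] at hj; simp only [if_pos rfl] at hj
              rcases Finset.mem_union.mp hj with h | h
              · exact huniqQ v z i h hi
              · exact absurd hi (hrestQ v h i)
            · rw [hPdef] at hj; simp only [if_neg hjz] at hj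
              exact huniqQ v j i hj hi
        · push_neg at hv
          have hvrest : v ∈ rest := by
            rw [hrest, Finset.mem_sdiff]
            refine ⟨Finset.mem_univ v, ?_⟩
            intro h
            obtain ⟨i, _, hi⟩ := Finset.mem_biUnion.mp h
            exact hv i hi
          refine ⟨z, ?_, ?_⟩
          · rw [hPdef]; simp only [if_pos rfl]; exact Finset.mem_union_right _ hvrest
          · intro j hj
            by_cases hjz : j = z
            · exact hjz
            · rw [hPdef] at hj; simp only [if_neg hjz] at hj
              exact absurd hj (hv j)
      · intro i j hij
        have hjz : j ≠ z := by
          intro h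
          subst h
          exact absurd hij (by simp [hz, Fin.lt_def])
        have hPj : P j = Q j := by rw [hPdef]; simp only [if_neg hjz]
        by_cases hiz : i = z
        · subst hiz
          have hdom := hQdom z j hij
          rw [hPj, hPdef]
          simp only [if_pos rfl]
          exact dominates_superset hdom Finset.subset_union_left
        · rw [hPj, hPdef]
          simp only [if_neg hiz]
          exact hQdom i j hij
    exact le_csSup hbdd ⟨P, hPpart⟩

/-- For any integer `t ≥ 1` and any finite simple graph `G`, `Tr(G) ≥ t` if and
only if `G` contains a `t`-atom as a subgraph. -/
theorem transitivity_ge_iff_contains_atom {V : Type} [Fintype V] (G : SimpleGraph V)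
    (t : ℕ) (ht : 1 ≤ t) :
    t ≤ G.transitivity ↔
      ∃ (α : Type) (H : SimpleGraph α), IsTAtom t H ∧ ContainsSubgraph H G :=
  transitivity_ge_iff_contains_atom' G t ht
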